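/- Let m, n ≥ 1, 0 ≤ k ≤ m, let ν̄;μ ∈ Q_k(m,n), let Λ = ψ_k(ν̄;μ) = (μ_1, …, μ_{m−k}, n − ν_k, …, n − ν_1; −ν′_n, …, −ν′_1), and let Λ′ = (μ_1, …, μ_{m−k}; −(ν′_n − k), …, −(ν′_1 − k)) regarded as a weight for gl(m−k|n). Then for every pair (i, j) with 1 ≤ i ≤ m and 1 ≤ j ≤ n: (i, j) is an atypical root of Λ (for the parameters (m, n)) if and only if i ≤ m − k and (i, j) is an atypical root of Λ′ (for the parameters (m−k, n)). In particular Γ(m|n)(Λ) = Γ(m−k|n)(Λ′). -/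
import Mathlib


/-- A partition: a weakly decreasing sequence of nonnegative integers with finitely many
nonzero parts, given by its (0-based) sequence of parts, so `parts i` is `ν_{i+1}`. -/
structure PPartition where
  parts : ℕ → ℕ
  antitone : Antitone parts
  eventually_zero : ∃ N, ∀ i, N ≤ i → parts i = 0

/-- The conjugate partition value `ν′_j = #{i ≥ 1 : ν_i ≥ j}`. -/
noncomputable def conjP (ν : PPartition) (j : ℕ) : ℕ :=
  Set.ncard {i : ℕ | j ≤ ν.parts i}

/-- The length `l(ν)`: the number of nonzero parts. -/
noncomputable def lenP (ν : PPartition) : ℕ := conjP ν 1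

/-- Membership in the set `P_k` of special weights for `gl(p|q)`. -/
def InPk (p q k : ℕ) (α : Fin p → ℤ) (β : Fin q → ℤ) : Prop :=
  Antitone α ∧ Antitone β ∧ k ≤ p ∧
    (∀ j : Fin q, (j : ℕ) = 0 → β j = -(k : ℤ)) ∧
    (∀ i : Fin p, (i : ℕ) + 1 + k = p → 0 ≤ α i) ∧
    (∀ i : Fin p, (i : ℕ) + k = p → α i ≤ 0)

/-- The composite partition `ν̄;μ` belongs to `Q_k(m,n)`: `l(μ) ≤ m − k` and `ν′_n = k`. -/
noncomputable def InQk (m n k : ℕ) (ν μ : PPartition) : Prop :=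
  lenP μ ≤ m - k ∧ conjP ν n = k

/-- The even part of the tuple `ψ_k(ν̄;μ) = (μ_1, …, μ_{m−k}, n−ν_k, …, n−ν_1; …)`. -/
def psiEven (m n k : ℕ) (ν μ : PPartition) : Fin m → ℤ := fun i =>
  if (i : ℕ) + k < m then (μ.parts (i : ℕ) : ℤ)
  else (n : ℤ) - (ν.parts (m - 1 - (i : ℕ)) : ℤ)

/-- The odd part of the tuple `ψ_k(ν̄;μ) = (…; −ν′_n, −ν′_{n−1}, …, −ν′_1)`. -/
noncomputable def psiOdd (n : ℕ) (ν : PPartition) : Fin n → ℤ := fun j =>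
  -((conjP ν (n - (j : ℕ)) : ℤ))


/-- `(i, j)` (0-based) is an atypical root of the weight `(α; β)` for `gl(p|q)`:
in 1-based indices, `α_i + p + 1 − i = −β_j + j`. -/
def AtypRoot (p q : ℕ) (α : Fin p → ℤ) (β : Fin q → ℤ) (i : Fin p) (j : Fin q) : Prop :=
  α i + (p : ℤ) + 1 - (((i : ℕ) : ℤ) + 1) = -(β j) + (((j : ℕ) : ℤ) + 1)

lemma conjP_finite (ν : PPartition) {j : ℕ} (hj : 1 ≤ j) :
    {i : ℕ | j ≤ ν.parts i}.Finite := by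
  obtain ⟨N, hN⟩ := ν.eventually_zero
  apply Set.Finite.subset (Set.finite_Iio N)
  intro i hi
  simp only [Set.mem_setOf_eq] at hi
  simp only [Set.mem_Iio] at *
  by_contra hc
  have := hN i (by omega)
  omega

lemma conjP_mono (ν : PPartition) {a b : ℕ} (ha : 1 ≤ a) (hab : a ≤ b) :
    conjP ν b ≤ conjP ν a := by
  apply Set.ncard_le_ncard _ (conjP_finite ν ha)
  intro i hi
  simp only [Set.mem_setOf_eq] at *
  omega

lemma parts_ge (ν : PPartition) {n k t : ℕ} (hn : 1 ≤ n) (hc : conjP ν n = k)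
    (ht : t < k) : n ≤ ν.parts t := by
  by_contra hc2
  have hsub : {i : ℕ | n ≤ ν.parts i} ⊆ Set.Iio t := by
    intro i hi
    simp only [Set.mem_setOf_eq, Set.mem_Iio] at *
    by_contra hit
    have := ν.antitone (show t ≤ i by omega)
    omega
  have h1 := Set.ncard_le_ncard hsub (Set.finite_Iio t)
  have h2 : {i : ℕ | n ≤ ν.parts i}.ncard = k := hc
  have h3 : (Set.Iio t).ncard = t := by
    rw [← Finset.coe_Iio, Set.ncard_coe_finset, Nat.card_Iio]
  omega

/-- For `ν̄;μ ∈ Q_k(m,n)`, `Λ = ψ_k(ν̄;μ)` and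
`Λ′ = (μ_1, …, μ_{m−k}; −(ν′_n−k), …, −(ν′_1−k))` (a `gl(m−k|n)` weight), a pair `(i, j)`
is an atypical root of `Λ` iff `i ≤ m−k` and `(i, j)` is an atypical root of `Λ′`.
In particular `Γ(m|n)(Λ) = Γ(m−k|n)(Λ′)`. -/
theorem atypical_iff (m n k : ℕ) (hm : 0 < m) (hn : 0 < n) (hk : k ≤ m)
    (ν μ : PPartition) (h : InQk m n k ν μ) :
    ∀ (i : Fin m) (j : Fin n),
      AtypRoot m n (psiEven m n k ν μ) (psiOdd n ν) i j ↔
      ∃ hik : (i : ℕ) + k < m,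
        AtypRoot (m - k) n (fun i' => (μ.parts (i' : ℕ) : ℤ))
          (fun j' => -((conjP ν (n - (j' : ℕ)) : ℤ) - (k : ℤ)))
          ⟨(i : ℕ), by omega⟩ j := by
  intro i j
  have hck : conjP ν n = k := h.2
  have hj1 : 1 ≤ n - (j : ℕ) := by omega
  have hjn : conjP ν n ≤ conjP ν (n - (j : ℕ)) := conjP_mono ν hj1 (by omega)
  by_cases hik : (i : ℕ) + k < m
  · simp only [AtypRoot, psiEven, psiOdd, if_pos hik]
    constructor
    · intro H
      refine ⟨hik, ?_⟩
      push_cast [Nat.cast_sub hk] at H ⊢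
      omega
    · rintro ⟨_, H⟩
      push_cast [Nat.cast_sub hk] at H ⊢
      omega
  · constructor
    · intro H
      exfalso
      simp only [AtypRoot, psiEven, psiOdd, if_neg hik] at H
      have ht : m - 1 - (i : ℕ) < k := by omega
      have hp := parts_ge ν (by omega) hck ht
      have hi : (i : ℕ) < m := i.isLt
      push_cast at H
      omega
    · rintro ⟨hik', _⟩
      exact absurd hik' hik
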